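/- Each of the four vector fields t0 = θ∂_x + ((θ² - x²)/2)∂_y - x∂_θ, t1 = ∂_x, t2 = x∂_y + ∂_θ, t3 = ∂_y on ℝ³ preserves the distribution spanned by n1 = ∂_θ and n2 = ∂_x + θ∂_y (i.e., the Lie bracket of each t_i with any section of the distribution is again a section of the distribution) and has vanishing Lie derivative of the sub-Riemannian metric r = dx² + dθ² restricted to the distribution. -/

import Mathlib

open Real

/-- The Lie bracket of vector fields on `ℝ³` (coordinates `(x, y, θ)` = indices `0,1,2`). -/
noncomputable def lieBracket (X Y : (Fin 3 → ℝ) → (Fin 3 → ℝ)) :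
    (Fin 3 → ℝ) → (Fin 3 → ℝ) :=
  fun p => fderiv ℝ Y p (X p) - fderiv ℝ X p (Y p)

/-- `n1 = ∂_θ`. -/
def n1 : (Fin 3 → ℝ) → (Fin 3 → ℝ) := fun _ => ![0, 0, 1]

/-- `n2 = ∂_x + θ ∂_y`. -/
def n2 : (Fin 3 → ℝ) → (Fin 3 → ℝ) := fun p => ![1, p 2, 0]

/-- The sub-Riemannian metric `r = dx² + dθ²` (making `n1, n2` orthonormal), as a
bilinear form on tangent vectors. -/
def rMet (u w : Fin 3 → ℝ) : ℝ := u 0 * w 0 + u 2 * w 2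

/-- `v` preserves the distribution `𝒩 = span{n1, n2}`: brackets with the generators are
again (function-coefficient) sections of `𝒩`. -/
def PreservesDistribution (v : (Fin 3 → ℝ) → (Fin 3 → ℝ)) : Prop :=
  ∀ n, (n = n1 ∨ n = n2) → ∃ a b : (Fin 3 → ℝ) → ℝ,
    lieBracket v n = fun p => a p • n1 p + b p • n2 p

/-- The Lie derivative of `r` along `v` vanishes on the distribution:
`v(r(nᵢ,nⱼ)) - r([v,nᵢ],nⱼ) - r(nᵢ,[v,nⱼ]) = 0` for `i, j ∈ {1,2}`. -/
def MetricLieDerivZero (v : (Fin 3 → ℝ) → (Fin 3 → ℝ)) : Prop :=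
  ∀ ni nj, (ni = n1 ∨ ni = n2) → (nj = n1 ∨ nj = n2) → ∀ p : Fin 3 → ℝ,
    fderiv ℝ (fun q => rMet (ni q) (nj q)) p (v p)
      - rMet (lieBracket v ni p) (nj p) - rMet (ni p) (lieBracket v nj p) = 0

namespace SymAux
open ContinuousLinearMap

noncomputable def T0 : (Fin 3 → ℝ) → (Fin 3 → ℝ) := fun p => ![p 2, (p 2 ^ 2 - p 0 ^ 2) / 2, -(p 0)]
def T2 : (Fin 3 → ℝ) → (Fin 3 → ℝ) := fun p => ![0, p 0, 1]

noncomputable def Dt0 (p : Fin 3 → ℝ) : (Fin 3 → ℝ) →L[ℝ] (Fin 3 → ℝ) :=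
  pi ![proj 2, p 2 • proj 2 - p 0 • proj 0, -proj 0]
noncomputable def Dn2 : (Fin 3 → ℝ) →L[ℝ] (Fin 3 → ℝ) := pi ![0, proj 2, 0]
noncomputable def Dt2 : (Fin 3 → ℝ) →L[ℝ] (Fin 3 → ℝ) := pi ![0, proj 0, 0]

lemma hproj (i : Fin 3) (p : Fin 3 → ℝ) :
    HasFDerivAt (fun q : Fin 3 → ℝ => q i) (proj i : (Fin 3 → ℝ) →L[ℝ] ℝ) p :=
  (proj i : (Fin 3 → ℝ) →L[ℝ] ℝ).hasFDerivAt

lemma hT0 (p : Fin 3 → ℝ) : HasFDerivAt T0 (Dt0 p) p := by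
  rw [hasFDerivAt_pi']
  intro i
  fin_cases i <;>
    simp only [T0, Dt0, proj_pi, Matrix.cons_val_zero, Matrix.cons_val_one, Matrix.head_cons,
      Matrix.cons_val_two, Matrix.tail_cons]
  · exact hproj 2 p
  · have := (((hproj 2 p).mul (hproj 2 p)).sub ((hproj 0 p).mul (hproj 0 p))).const_mul (2⁻¹ : ℝ)
    simp only [Fin.mk_one, Matrix.cons_val_one, Matrix.head_cons, Matrix.cons_val_zero]
    refine (this.congr_fderiv ?_).congr_of_eventuallyEq (Filter.Eventually.of_forall fun q => ?_)
    · ext v; simp; ring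
    · show (q 2 ^ 2 - q 0 ^ 2) / 2 = 2⁻¹ * (q 2 * q 2 - q 0 * q 0)
      ring
  · exact (hproj 0 p).neg

lemma hN2 (p : Fin 3 → ℝ) : HasFDerivAt n2 Dn2 p := by
  rw [hasFDerivAt_pi']
  intro i
  fin_cases i <;>
    simp only [n2, Dn2, proj_pi, Matrix.cons_val_zero, Matrix.cons_val_one, Matrix.head_cons,
      Matrix.cons_val_two, Matrix.tail_cons]
  · exact hasFDerivAt_const _ _
  · exact hproj 2 p
  · exact hasFDerivAt_const _ _

lemma hT2 (p : Fin 3 → ℝ) : HasFDerivAt T2 Dt2 p := by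
  rw [hasFDerivAt_pi']
  intro i
  fin_cases i <;>
    simp only [T2, Dt2, proj_pi, Matrix.cons_val_zero, Matrix.cons_val_one, Matrix.head_cons,
      Matrix.cons_val_two, Matrix.tail_cons]
  · exact hasFDerivAt_const _ _
  · exact hproj 0 p
  · exact hasFDerivAt_const _ _

lemma fderiv_n1 (p : Fin 3 → ℝ) : fderiv ℝ n1 p = 0 :=
  (hasFDerivAt_const (![0,0,1] : Fin 3 → ℝ) p).fderiv

lemma fderiv_n2 (p : Fin 3 → ℝ) : fderiv ℝ n2 p = Dn2 := (hN2 p).fderiv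
lemma fderiv_T0 (p : Fin 3 → ℝ) : fderiv ℝ T0 p = Dt0 p := (hT0 p).fderiv
lemma fderiv_T2 (p : Fin 3 → ℝ) : fderiv ℝ T2 p = Dt2 := (hT2 p).fderiv

lemma lb_T0_n1 : lieBracket T0 n1 = fun p => -(n2 p) := by
  funext p
  simp only [lieBracket, fderiv_n1, fderiv_T0, ContinuousLinearMap.zero_apply]
  ext i
  fin_cases i <;>
    simp [Dt0, n1, n2, pi_apply, T0]

lemma lb_T0_n2 : lieBracket T0 n2 = n1 := by
  funext p
  simp only [lieBracket, fderiv_n2, fderiv_T0]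
  ext i
  fin_cases i <;>
    simp [Dt0, Dn2, n1, n2, pi_apply, T0]

lemma lb_T2_n1 : lieBracket T2 n1 = fun _ => 0 := by
  funext p
  simp only [lieBracket, fderiv_n1, fderiv_T2, ContinuousLinearMap.zero_apply]
  ext i
  fin_cases i <;> simp [Dt2, n1, n2, pi_apply, T2]

lemma lb_T2_n2 : lieBracket T2 n2 = fun _ => 0 := by
  funext p
  simp only [lieBracket, fderiv_n2, fderiv_T2]
  ext i
  fin_cases i <;> simp [Dt2, Dn2, n1, n2, pi_apply, T2]


lemma fderiv_const3 (c : Fin 3 → ℝ) (p : Fin 3 → ℝ) :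
    fderiv ℝ (fun _ : Fin 3 → ℝ => c) p = 0 :=
  (hasFDerivAt_const c p).fderiv

lemma lb_const_n1 (c : Fin 3 → ℝ) : lieBracket (fun _ => c) n1 = fun _ => 0 := by
  funext p
  simp [lieBracket, fderiv_n1, fderiv_const_apply]

lemma lb_const_n2 (c : Fin 3 → ℝ) (h : c 2 = 0) :
    lieBracket (fun _ => c) n2 = fun _ => 0 := by
  funext p
  simp only [lieBracket, fderiv_n2, fderiv_const_apply, ContinuousLinearMap.zero_apply]
  ext i
  fin_cases i <;> simp [Dn2, pi_apply, h]

lemma rMet_comm (u w : Fin 3 → ℝ) : rMet u w = rMet w u := by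
  simp [rMet]; ring

lemma metric_zero_of (v : (Fin 3 → ℝ) → (Fin 3 → ℝ)) (b1 b2 : (Fin 3 → ℝ) → (Fin 3 → ℝ))
    (h1 : lieBracket v n1 = b1) (h2 : lieBracket v n2 = b2)
    (H11 : ∀ p, rMet (b1 p) (n1 p) = 0)
    (H12 : ∀ p, rMet (b1 p) (n2 p) + rMet (n1 p) (b2 p) = 0)
    (H22 : ∀ p, rMet (b2 p) (n2 p) = 0) : MetricLieDerivZero v := by
  have c11 : (fun q : Fin 3 → ℝ => rMet (n1 q) (n1 q)) = fun _ => (1:ℝ) := by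
    funext q; simp [rMet, n1]
  have c12 : (fun q : Fin 3 → ℝ => rMet (n1 q) (n2 q)) = fun _ => (0:ℝ) := by
    funext q; simp [rMet, n1, n2]
  have c21 : (fun q : Fin 3 → ℝ => rMet (n2 q) (n1 q)) = fun _ => (0:ℝ) := by
    funext q; simp [rMet, n1, n2]
  have c22 : (fun q : Fin 3 → ℝ => rMet (n2 q) (n2 q)) = fun _ => (1:ℝ) := by
    funext q; simp [rMet, n1, n2]
  intro ni nj hi hj p
  rcases hi with rfl | rfl <;> rcases hj with rfl | rfl
  · rw [c11, h1, fderiv_const_apply]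
    have := H11 p
    rw [rMet_comm] at this ⊢
    simp [this]
  · rw [c12, h1, h2, fderiv_const_apply]
    have := H12 p
    simp only [ContinuousLinearMap.zero_apply]
    linarith
  · rw [c21, h1, h2, fderiv_const_apply]
    have := H12 p
    rw [rMet_comm (b1 p) (n2 p), rMet_comm (n1 p) (b2 p)] at this
    simp only [ContinuousLinearMap.zero_apply]
    linarith
  · rw [c22, h2, fderiv_const_apply]
    have := H22 p
    rw [rMet_comm] at this ⊢
    simp [this]

end SymAux

/-- Each of `t0`, `t1`, `t2`, `t3` preserves the distribution and kills the metric. -/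
theorem infinitesimal_symmetries_of_nilpotent_disc :
    let t0 : (Fin 3 → ℝ) → (Fin 3 → ℝ) := fun p => ![p 2, (p 2 ^ 2 - p 0 ^ 2) / 2, -(p 0)]
    let t1 : (Fin 3 → ℝ) → (Fin 3 → ℝ) := fun _ => ![1, 0, 0]
    let t2 : (Fin 3 → ℝ) → (Fin 3 → ℝ) := fun p => ![0, p 0, 1]
    let t3 : (Fin 3 → ℝ) → (Fin 3 → ℝ) := fun _ => ![0, 1, 0]
    ∀ t, (t = t0 ∨ t = t1 ∨ t = t2 ∨ t = t3) →
      PreservesDistribution t ∧ MetricLieDerivZero t := by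
  intro t0 t1 t2 t3 t ht
  have e0 : t0 = SymAux.T0 := rfl
  have e2 : t2 = SymAux.T2 := rfl
  rcases ht with rfl | rfl | rfl | rfl
  · rw [e0]
    constructor
    · intro n hn
      rcases hn with rfl | rfl
      · refine ⟨fun _ => 0, fun _ => -1, ?_⟩
        rw [SymAux.lb_T0_n1]
        funext p
        simp
      · refine ⟨fun _ => 1, fun _ => 0, ?_⟩
        rw [SymAux.lb_T0_n2]
        funext p
        simp
    · exact SymAux.metric_zero_of _ _ _ SymAux.lb_T0_n1 SymAux.lb_T0_n2
        (fun p => by simp [rMet, n1, n2]) (fun p => by simp [rMet, n1, n2])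
        (fun p => by simp [rMet, n1, n2])
  · constructor
    · intro n hn
      refine ⟨fun _ => 0, fun _ => 0, ?_⟩
      rcases hn with rfl | rfl
      · rw [SymAux.lb_const_n1]; funext p; simp
      · rw [SymAux.lb_const_n2 _ rfl]; funext p; simp
    · exact SymAux.metric_zero_of _ _ _ (SymAux.lb_const_n1 _)
        (SymAux.lb_const_n2 _ rfl)
        (fun p => by simp [rMet]) (fun p => by simp [rMet, n1]) (fun p => by simp [rMet])
  · rw [e2]
    constructor
    · intro n hn
      refine ⟨fun _ => 0, fun _ => 0, ?_⟩
      rcases hn with rfl | rfl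
      · rw [SymAux.lb_T2_n1]; funext p; simp
      · rw [SymAux.lb_T2_n2]; funext p; simp
    · exact SymAux.metric_zero_of _ _ _ SymAux.lb_T2_n1 SymAux.lb_T2_n2
        (fun p => by simp [rMet]) (fun p => by simp [rMet, n1]) (fun p => by simp [rMet])
  · constructor
    · intro n hn
      refine ⟨fun _ => 0, fun _ => 0, ?_⟩
      rcases hn with rfl | rfl
      · rw [SymAux.lb_const_n1]; funext p; simp
      · rw [SymAux.lb_const_n2 _ rfl]; funext p; simp
    · exact SymAux.metric_zero_of _ _ _ (SymAux.lb_const_n1 _)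
        (SymAux.lb_const_n2 _ rfl)
        (fun p => by simp [rMet]) (fun p => by simp [rMet, n1]) (fun p => by simp [rMet])
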